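/- arXiv:0809.4914 — 3 statements merged into one kernel-verified Lean document; each statement's English description precedes it below -/
import Mathlib

section
/- Let $d_0,\dots,d_r$ be a difference sequence of order $r$ (i.e. $\sum d_i = 0$, $\sum d_i^2 = 1$) and let $\delta_r = \sum_{m=1}^r \big(\sum_{j=0}^{r-m} d_j d_{j+m}\big)^2$. Then $\delta_r \ge \frac{1}{4r}$. -/
lemma sq_sum_expand (d : ℕ → ℝ) (n : ℕ) :
    (∑ i ∈ Finset.range n, d i) ^ 2 =
      ∑ i ∈ Finset.range n, d i ^ 2 +
        2 * ∑ i ∈ Finset.range n, ∑ k ∈ Finset.range i, d i * d k := by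
  induction n with
  | zero => simp
  | succ n ih =>
    rw [Finset.sum_range_succ, Finset.sum_range_succ (fun i => d i ^ 2),
      Finset.sum_range_succ (fun i => ∑ k ∈ Finset.range i, d i * d k),
      add_sq, ih, Finset.mul_sum]
    simp only [← Finset.mul_sum]
    ring

theorem delta_r_lower_bound (r : ℕ) (d : ℕ → ℝ)
    (hsum : ∑ i ∈ Finset.range (r + 1), d i = 0)
    (hsq : ∑ i ∈ Finset.range (r + 1), d i ^ 2 = 1) :
    (1 : ℝ) / (4 * r) ≤
      ∑ m ∈ Finset.Icc 1 r, (∑ j ∈ Finset.range (r - m + 1), d j * d (j + m)) ^ 2 := by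
  rcases Nat.eq_zero_or_pos r with hr | hr
  · subst hr; simp
  have key : ∑ m ∈ Finset.Icc 1 r, ∑ j ∈ Finset.range (r - m + 1), d j * d (j + m)
      = ∑ i ∈ Finset.range (r + 1), ∑ k ∈ Finset.range i, d i * d k := by
    rw [Finset.sum_sigma', Finset.sum_sigma']
    apply Finset.sum_nbij' (fun p => ⟨p.2 + p.1, p.2⟩) (fun q => ⟨q.1 - q.2, q.2⟩)
    · rintro ⟨m, j⟩ hp
      simp only [Finset.mem_sigma, Finset.mem_Icc, Finset.mem_range] at hp ⊢
      omega
    · rintro ⟨i, k⟩ hq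
      simp only [Finset.mem_sigma, Finset.mem_Icc, Finset.mem_range] at hq ⊢
      omega
    · rintro ⟨m, j⟩ hp
      simp only [Finset.mem_sigma, Finset.mem_Icc, Finset.mem_range] at hp
      simp only [Sigma.mk.inj_iff, heq_eq_eq]
      exact ⟨by omega, trivial⟩
    · rintro ⟨i, k⟩ hq
      simp only [Finset.mem_sigma, Finset.mem_Icc, Finset.mem_range] at hq
      simp only [Sigma.mk.inj_iff, heq_eq_eq]
      exact ⟨by omega, trivial⟩
    · rintro ⟨m, j⟩ hp
      simp [mul_comm]
  have hS : ∑ m ∈ Finset.Icc 1 r, ∑ j ∈ Finset.range (r - m + 1), d j * d (j + m)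
      = -(1 / 2) := by
    have h := sq_sum_expand d (r + 1)
    rw [hsum, hsq] at h
    rw [key]
    linarith
  have hCS := sq_sum_le_card_mul_sum_sq
    (s := Finset.Icc 1 r)
    (f := fun m => ∑ j ∈ Finset.range (r - m + 1), d j * d (j + m))
  rw [hS, Nat.card_Icc] at hCS
  simp only [Nat.add_sub_cancel] at hCS
  have hr' : (0:ℝ) < r := by exact_mod_cast hr
  rw [div_le_iff₀ (by linarith)]
  nlinarith [hCS]
end

section
/- Let $g : [0,1] \to \mathbb{R}^d$, $f, \beta : [0,1] \to \mathbb{R}$ be continuous with $f, \beta > 0$, suppose $H(t) = \int_t^1 \beta^{-1}(u) g(u) g(u)^T f(u)\,du$ is invertible for all $t \in [0,1)$, and fix a vector $v \in \mathbb{R}^d$. Define $\eta(t) = \int_0^t \beta^{-1/2}(x) g(x)^T v \, f(x)\,dx$. Then for all $t \in [0,1)$, $(T\eta)(t) := \eta(t) - \int_0^t \beta^{-1/2}(y) g(y)^T H^{-1}(y) \Big(\int_y^1 \beta^{-1}(z) g(z) g(z)^T v \, f(z)\,dz\Big) f(y)\,dy = 0$. -/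
open Matrix

theorem martingale_transform_annihilates_parametric_part
    (d : ℕ) (g : ℝ → Fin d → ℝ)
    (hgcont : ∀ i, ContinuousOn (fun x => g x i) (Set.Icc 0 1))
    (f β : ℝ → ℝ)
    (hf : ContinuousOn f (Set.Icc 0 1)) (hfpos : ∀ x ∈ Set.Icc (0 : ℝ) 1, 0 < f x)
    (hβ : ContinuousOn β (Set.Icc 0 1)) (hβpos : ∀ x ∈ Set.Icc (0 : ℝ) 1, 0 < β x)
    (H : ℝ → Matrix (Fin d) (Fin d) ℝ)
    (hH : ∀ y, ∀ i j, H y i j = ∫ z in y..1, (β z)⁻¹ * g z i * g z j * f z)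
    (hHinv : ∀ y ∈ Set.Ico (0 : ℝ) 1, IsUnit (H y).det)
    (v : Fin d → ℝ)
    (η : ℝ → ℝ)
    (hη : ∀ t, η t = ∫ x in (0 : ℝ)..t, (Real.sqrt (β x))⁻¹ * (g x ⬝ᵥ v) * f x) :
    ∀ t ∈ Set.Ico (0 : ℝ) 1,
      η t - ∫ y in (0 : ℝ)..t,
        (Real.sqrt (β y))⁻¹ *
          (g y ⬝ᵥ ((H y)⁻¹ *ᵥ
            (fun i => ∫ z in y..1, (β z)⁻¹ * (g z ⬝ᵥ v) * g z i * f z))) * f y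
      = 0 := by
  intro t ht
  obtain ⟨ht0, ht1⟩ := ht
  have key : ∀ y ∈ Set.uIcc (0:ℝ) t,
      (Real.sqrt (β y))⁻¹ *
        (g y ⬝ᵥ ((H y)⁻¹ *ᵥ
          (fun i => ∫ z in y..1, (β z)⁻¹ * (g z ⬝ᵥ v) * g z i * f z))) * f y
      = (Real.sqrt (β y))⁻¹ * (g y ⬝ᵥ v) * f y := by
    intro y hy
    rw [Set.uIcc_of_le ht0] at hy
    have hy01 : y ∈ Set.Ico (0:ℝ) 1 := ⟨hy.1, lt_of_le_of_lt hy.2 ht1⟩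
    have hvec : (fun i => ∫ z in y..1, (β z)⁻¹ * (g z ⬝ᵥ v) * g z i * f z)
        = (H y) *ᵥ v := by
      funext i
      have hsub : Set.uIcc y 1 ⊆ Set.Icc (0:ℝ) 1 := by
        rw [Set.uIcc_of_le hy01.2.le]
        exact Set.Icc_subset_Icc hy01.1 le_rfl
      have hint : ∀ j : Fin d, IntervalIntegrable
          (fun z => (β z)⁻¹ * g z i * g z j * f z * v j) MeasureTheory.volume y 1 := by
        intro j
        apply ContinuousOn.intervalIntegrable
        have hβinv : ContinuousOn (fun z => (β z)⁻¹) (Set.uIcc y 1) :=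
          ContinuousOn.inv₀ (hβ.mono hsub)
            (fun z hz => (hβpos z (hsub hz)).ne')
        exact ((((hβinv.mul ((hgcont i).mono hsub)).mul
          ((hgcont j).mono hsub)).mul (hf.mono hsub)).mul continuousOn_const)
      have expand : ∀ z, (β z)⁻¹ * (g z ⬝ᵥ v) * g z i * f z
          = ∑ j : Fin d, (β z)⁻¹ * g z i * g z j * f z * v j := by
        intro z
        simp only [dotProduct, Finset.mul_sum, Finset.sum_mul]
        congr 1; funext j; ring
      rw [Matrix.mulVec, dotProduct]
      simp only [expand]
      rw [intervalIntegral.integral_finset_sum (fun j _ => hint j)]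
      congr 1; funext j
      rw [hH y i j, ← intervalIntegral.integral_mul_const]
    rw [hvec, Matrix.mulVec_mulVec, Matrix.nonsing_inv_mul _ (hHinv y hy01),
      Matrix.one_mulVec]
  rw [hη t, intervalIntegral.integral_congr key, sub_self]
end

section
/- Let $g : [0,1] \to \mathbb{R}^d$, $f, \beta : [0,1] \to \mathbb{R}$ be continuous with $f, \beta > 0$, $F(t) = \int_0^t f$, $a(y) = \beta^{-1/2}(y) g(y)$, and $H(y) = \int_y^1 a(u) a(u)^T f(u)\,du$ invertible for $y \in [0,1)$. Then for all $0 \le r \le s < 1$: $-\int_0^r a(y)^T H^{-1}(y) \Big(\int_y^r a(x) f(x)\,dx\Big) f(y)\,dy - \int_0^r a(y)^T H^{-1}(y)\Big(\int_y^s a(x) f(x)\,dx\Big) f(y)\,dy + \int_0^r \int_0^s a(y_1)^T H^{-1}(y_1) H(y_1 \vee y_2) H^{-1}(y_2) a(y_2) f(y_2) f(y_1)\,dy_2\,dy_1 = 0$. -/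
open Matrix MeasureTheory intervalIntegral Set

lemma dot_intervalIntegral {d : ℕ} (u : Fin d → ℝ) (k : ℝ → Fin d → ℝ) (p q : ℝ)
    (hk : ∀ i, IntervalIntegrable (fun x => k x i) MeasureTheory.volume p q) :
    (∫ x in p..q, u ⬝ᵥ k x) = u ⬝ᵥ (fun i => ∫ x in p..q, k x i) := by
  simp only [dotProduct]
  rw [intervalIntegral.integral_finset_sum (fun i _ => (hk i).const_mul (u i))]
  simp [intervalIntegral.integral_const_mul]

lemma mulVec_intervalIntegral {d : ℕ} (M : Matrix (Fin d) (Fin d) ℝ) (k : ℝ → Fin d → ℝ)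
    (p q : ℝ) (hk : ∀ i, IntervalIntegrable (fun x => k x i) MeasureTheory.volume p q) :
    (fun i => ∫ x in p..q, (M *ᵥ k x) i) = M *ᵥ (fun i => ∫ x in p..q, k x i) := by
  funext i
  simp only [Matrix.mulVec, dotProduct]
  rw [intervalIntegral.integral_finset_sum (fun j _ => (hk j).const_mul (M i j))]
  simp [intervalIntegral.integral_const_mul]

lemma contOn_dot {d : ℕ} {u v : ℝ → Fin d → ℝ} {s : Set ℝ}
    (hu : ∀ i, ContinuousOn (fun x => u x i) s) (hv : ∀ i, ContinuousOn (fun x => v x i) s) :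
    ContinuousOn (fun x => u x ⬝ᵥ v x) s := by
  simp only [dotProduct]
  exact continuousOn_finset_sum _ fun i _ => (hu i).mul (hv i)

lemma dot_mulVec_symm {d : ℕ} (M : Matrix (Fin d) (Fin d) ℝ) (hM : Mᵀ = M)
    (u w : Fin d → ℝ) : u ⬝ᵥ (M *ᵥ w) = w ⬝ᵥ (M *ᵥ u) := by
  conv_lhs => rw [Matrix.dotProduct_mulVec, ← hM, Matrix.vecMul_transpose]
  rw [dotProduct_comm]

lemma dot_mulVec_scale {d : ℕ} (u v : Fin d → ℝ) (M : Matrix (Fin d) (Fin d) ℝ) (t : ℝ) :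
    (u ⬝ᵥ (M *ᵥ v)) * t = u ⬝ᵥ (M *ᵥ (fun i => v i * t)) := by
  simp only [Matrix.mulVec, dotProduct, Finset.sum_mul]
  refine Finset.sum_congr rfl fun i _ => ?_
  rw [mul_assoc, Finset.sum_mul, Finset.mul_sum, Finset.mul_sum]
  exact Finset.sum_congr rfl fun j _ => by ring

set_option maxHeartbeats 4000000 in
theorem covariance_correction_terms_cancel
    (d : ℕ) (g : ℝ → Fin d → ℝ)
    (hgcont : ∀ i, ContinuousOn (fun x => g x i) (Set.Icc 0 1))
    (f β : ℝ → ℝ)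
    (hf : ContinuousOn f (Set.Icc 0 1)) (hfpos : ∀ x ∈ Set.Icc (0 : ℝ) 1, 0 < f x)
    (hβ : ContinuousOn β (Set.Icc 0 1)) (hβpos : ∀ x ∈ Set.Icc (0 : ℝ) 1, 0 < β x)
    (F : ℝ → ℝ) (hF : ∀ t, F t = ∫ x in (0 : ℝ)..t, f x)
    (a : ℝ → Fin d → ℝ) (ha : ∀ y i, a y i = (Real.sqrt (β y))⁻¹ * g y i)
    (H : ℝ → Matrix (Fin d) (Fin d) ℝ)
    (hH : ∀ y, ∀ i j, H y i j = ∫ u in y..1, a u i * a u j * f u)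
    (hHinv : ∀ y ∈ Set.Ico (0 : ℝ) 1, IsUnit (H y).det) :
    ∀ r s : ℝ, 0 ≤ r → r ≤ s → s < 1 →
      (-∫ y in (0 : ℝ)..r,
          (a y ⬝ᵥ ((H y)⁻¹ *ᵥ (fun i => ∫ x in y..r, a x i * f x))) * f y)
      - (∫ y in (0 : ℝ)..r,
          (a y ⬝ᵥ ((H y)⁻¹ *ᵥ (fun i => ∫ x in y..s, a x i * f x))) * f y)
      + (∫ y₁ in (0 : ℝ)..r, (∫ y₂ in (0 : ℝ)..s,
          (a y₁ ⬝ᵥ (((H y₁)⁻¹ * H (max y₁ y₂) * (H y₂)⁻¹) *ᵥ a y₂)) * f y₂) * f y₁)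
      = 0 := by
  intro r s hr hrs hs1
  have h01 : (0:ℝ) ≤ 1 := by norm_num
  have hr1 : r < 1 := lt_of_le_of_lt hrs hs1
  have hs0 : (0:ℝ) ≤ s := le_trans hr hrs
  -- continuity of a
  have haC : ∀ i, ContinuousOn (fun x => a x i) (Set.Icc 0 1) := by
    intro i
    have hfun : (fun x => a x i) = fun x => (Real.sqrt (β x))⁻¹ * g x i :=
      funext fun x => ha x i
    rw [hfun]
    have hsq : ContinuousOn (fun x => Real.sqrt (β x)) (Set.Icc 0 1) :=
      Real.continuous_sqrt.comp_continuousOn hβ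
    exact (hsq.inv₀ fun x hx => (Real.sqrt_pos.2 (hβpos x hx)).ne').mul (hgcont i)
  -- b = a * f
  set b : ℝ → Fin d → ℝ := fun y i => a y i * f y with hb
  have hbC : ∀ i, ContinuousOn (fun x => b x i) (Set.Icc 0 1) := fun i => (haC i).mul hf
  -- continuity of H
  have hHCij : ∀ i j, ContinuousOn (fun y => H y i j) (Set.Icc 0 1) := by
    intro i j
    have hfun : (fun y => H y i j) = fun y => ∫ u in y..1, a u i * a u j * f u :=
      funext fun y => hH y i j
    rw [hfun]
    have hint : MeasureTheory.IntegrableOn (fun u => a u i * a u j * f u)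
        (Set.uIcc 0 1) MeasureTheory.volume := by
      rw [Set.uIcc_of_le h01]
      exact (((haC i).mul (haC j)).mul hf).integrableOn_Icc
    have := intervalIntegral.continuousOn_primitive_interval_left hint
    rwa [Set.uIcc_of_le h01] at this
  have hHC : ContinuousOn H (Set.Icc 0 1) := by
    apply continuousOn_pi.2
    intro i
    exact continuousOn_pi.2 fun j => hHCij i j
  -- symmetry of H and H⁻¹
  have hHsym : ∀ y, (H y)ᵀ = H y := by
    intro y
    ext i j
    rw [Matrix.transpose_apply, hH, hH]
    congr 1
    funext u
    ring
  have hinvsym : ∀ y, ((H y)⁻¹)ᵀ = (H y)⁻¹ := by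
    intro y
    rw [Matrix.transpose_nonsing_inv, hHsym]
  have hdet : ∀ y, 0 ≤ y → y < 1 → IsUnit (H y).det := fun y h1 h2 => hHinv y ⟨h1, h2⟩
  -- continuity of H⁻¹ on [0, s]
  have hinvC : ContinuousOn (fun y => (H y)⁻¹) (Set.Icc 0 s) := by
    intro y hy
    have h1 : ContinuousWithinAt H (Set.Icc 0 s) y :=
      (hHC.mono (Set.Icc_subset_Icc le_rfl hs1.le)).continuousWithinAt hy
    have h2 : ContinuousAt Inv.inv (H y) := by
      apply continuousAt_matrix_inv
      rw [Ring.inverse_eq_inv']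
      exact continuousAt_inv₀ (hdet y hy.1 (lt_of_le_of_lt hy.2 hs1)).ne_zero
    exact h2.comp_continuousWithinAt h1
  have hinvCij : ∀ i j, ContinuousOn (fun y => (H y)⁻¹ i j) (Set.Icc 0 s) :=
    fun i j => continuousOn_pi.1 (continuousOn_pi.1 hinvC i) j
  -- c = H⁻¹ *ᵥ b
  set c : ℝ → Fin d → ℝ := fun y => (H y)⁻¹ *ᵥ b y with hc
  have hcCi : ∀ i, ContinuousOn (fun y => c y i) (Set.Icc 0 s) := by
    intro i
    have hfun : (fun y => c y i) = fun y => ∑ j, (H y)⁻¹ i j * b y j := by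
      funext y
      simp [hc, Matrix.mulVec, dotProduct]
    rw [hfun]
    exact continuousOn_finset_sum _ fun j _ =>
      (hinvCij i j).mul ((hbC j).mono (Set.Icc_subset_Icc le_rfl hs1.le))
  -- primitives
  set V : ℝ → Fin d → ℝ := fun t i => ∫ x in (0:ℝ)..t, c x i with hV
  set W : ℝ → Fin d → ℝ := fun t i => ∫ x in t..r, b x i with hW
  set Ws : ℝ → Fin d → ℝ := fun t i => ∫ x in t..s, b x i with hWs
  -- interval integrability
  have hbInt : ∀ i, ∀ p q : ℝ, 0 ≤ p → p ≤ q → q ≤ 1 →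
      IntervalIntegrable (fun x => b x i) MeasureTheory.volume p q := by
    intro i p q hp hpq hq
    apply ContinuousOn.intervalIntegrable
    rw [Set.uIcc_of_le hpq]
    exact (hbC i).mono (Set.Icc_subset_Icc hp hq)
  have hcInt : ∀ i, ∀ p q : ℝ, 0 ≤ p → p ≤ q → q ≤ s →
      IntervalIntegrable (fun x => c x i) MeasureTheory.volume p q := by
    intro i p q hp hpq hq
    apply ContinuousOn.intervalIntegrable
    rw [Set.uIcc_of_le hpq]
    exact (hcCi i).mono (Set.Icc_subset_Icc hp hq)
  -- continuity of V, W, Ws components on [0, r]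
  have hVCi : ∀ i, ContinuousOn (fun t => V t i) (Set.Icc 0 r) := by
    intro i
    have hint : MeasureTheory.IntegrableOn (fun x => c x i) (Set.uIcc 0 r)
        MeasureTheory.volume := by
      rw [Set.uIcc_of_le hr]
      exact ((hcCi i).mono (Set.Icc_subset_Icc le_rfl hrs)).integrableOn_Icc
    have := intervalIntegral.continuousOn_primitive_interval hint
    rwa [Set.uIcc_of_le hr] at this
  have hWCi : ∀ i, ContinuousOn (fun t => W t i) (Set.Icc 0 r) := by
    intro i
    have hint : MeasureTheory.IntegrableOn (fun x => b x i) (Set.uIcc 0 r)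
        MeasureTheory.volume := by
      rw [Set.uIcc_of_le hr]
      exact ((hbC i).mono (Set.Icc_subset_Icc le_rfl hr1.le)).integrableOn_Icc
    have := intervalIntegral.continuousOn_primitive_interval_left hint
    rwa [Set.uIcc_of_le hr] at this
  have hWsCi : ∀ i, ContinuousOn (fun t => Ws t i) (Set.Icc 0 r) := by
    intro i
    have hint : MeasureTheory.IntegrableOn (fun x => b x i) (Set.uIcc 0 s)
        MeasureTheory.volume := by
      rw [Set.uIcc_of_le hs0]
      exact ((hbC i).mono (Set.Icc_subset_Icc le_rfl hs1.le)).integrableOn_Icc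
    have := intervalIntegral.continuousOn_primitive_interval_left hint
    rw [Set.uIcc_of_le hs0] at this
    exact this.mono (Set.Icc_subset_Icc le_rfl hrs)
  -- pointwise continuity on open sets
  have hbCA : ∀ i, ∀ t ∈ Set.Ioo (0:ℝ) 1, ContinuousAt (fun x => b x i) t := by
    intro i t ht
    exact (hbC i).continuousAt (Icc_mem_nhds ht.1 ht.2)
  have hcCA : ∀ i, ∀ t ∈ Set.Ioo (0:ℝ) s, ContinuousAt (fun x => c x i) t := by
    intro i t ht
    have ht1 : t < 1 := lt_of_lt_of_le ht.2 hs1.le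
    have h1 : ContinuousAt H t := hHC.continuousAt (Icc_mem_nhds ht.1 ht1)
    have h2 : ContinuousAt (fun y => (H y)⁻¹) t := by
      refine ContinuousAt.comp ?_ h1
      apply continuousAt_matrix_inv
      rw [Ring.inverse_eq_inv']
      exact continuousAt_inv₀ (hdet t ht.1.le ht1).ne_zero
    have hfun : (fun y => c y i) = fun y => ∑ j, (H y)⁻¹ i j * b y j := by
      funext y
      simp [hc, Matrix.mulVec, dotProduct]
    rw [hfun]
    refine tendsto_finset_sum _ fun j _ => ContinuousAt.mul ?_ ?_
    · exact ((continuous_apply j).continuousAt.comp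
        ((continuous_apply i).continuousAt.comp h2))
    · exact hbCA j t ⟨ht.1, ht1⟩
  -- derivatives
  have hWd : ∀ i, ∀ t ∈ Set.Ioo (0:ℝ) r, HasDerivAt (fun u => W u i) (-(b t i)) t := by
    intro i t ht
    have ht1 : t ∈ Set.Ioo (0:ℝ) 1 := ⟨ht.1, lt_trans ht.2 hr1⟩
    have h1 : HasDerivAt (fun u => ∫ x in r..u, b x i) (b t i) t := by
      apply intervalIntegral.integral_hasDerivAt_right
      · exact (hbInt i t r ht.1.le ht.2.le hr1.le).symm
      · exact ContinuousAt.stronglyMeasurableAtFilter isOpen_Ioo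
          (fun x hx => hbCA i x hx) t ht1
      · exact hbCA i t ht1
    have h2 : (fun u => W u i) = fun u => -∫ x in r..u, b x i := by
      funext u
      simp only [hW]
      exact intervalIntegral.integral_symm r u
    rw [h2]
    exact h1.neg
  have hVd : ∀ i, ∀ t ∈ Set.Ioo (0:ℝ) r, HasDerivAt (fun u => V u i) (c t i) t := by
    intro i t ht
    have hts : t ∈ Set.Ioo (0:ℝ) s := ⟨ht.1, lt_of_lt_of_le ht.2 hrs⟩
    have h1 : HasDerivAt (fun u => ∫ x in (0:ℝ)..u, c x i) (c t i) t := by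
      apply intervalIntegral.integral_hasDerivAt_right
      · exact hcInt i 0 t le_rfl ht.1.le (le_trans ht.2.le hrs)
      · exact ContinuousAt.stronglyMeasurableAtFilter isOpen_Ioo
          (fun x hx => hcCA i x hx) t hts
      · exact hcCA i t hts
    exact h1
  -- product rule and FTC
  have hφd : ∀ t ∈ Set.Ioo (0:ℝ) r,
      HasDerivAt (fun u => W u ⬝ᵥ V u) (-(b t ⬝ᵥ V t) + W t ⬝ᵥ c t) t := by
    intro t ht
    have h1 : HasDerivAt (fun u => ∑ i, W u i * V u i)
        (∑ i, (-(b t i) * V t i + W t i * c t i)) t :=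
      HasDerivAt.fun_sum fun i _ => (hWd i t ht).mul (hVd i t ht)
    have h2 : (fun u => W u ⬝ᵥ V u) = fun u => ∑ i, W u i * V u i := by
      funext u
      simp [dotProduct]
    rw [h2]
    convert h1 using 1
    simp [dotProduct, Finset.sum_add_distrib, neg_mul, Finset.sum_neg_distrib]
  have sub1 : Set.Icc (0:ℝ) r ⊆ Set.Icc 0 1 := Set.Icc_subset_Icc le_rfl hr1.le
  have sub2 : Set.Icc (0:ℝ) r ⊆ Set.Icc 0 s := Set.Icc_subset_Icc le_rfl hrs
  have hφC : ContinuousOn (fun t => W t ⬝ᵥ V t) (Set.Icc 0 r) := contOn_dot hWCi hVCi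
  have hDC : ContinuousOn (fun t => -(b t ⬝ᵥ V t) + W t ⬝ᵥ c t) (Set.Icc 0 r) :=
    ((contOn_dot (fun i => (hbC i).mono sub1) hVCi).neg).add
      (contOn_dot hWCi (fun i => (hcCi i).mono sub2))
  have key : (∫ t in (0:ℝ)..r, (-(b t ⬝ᵥ V t) + W t ⬝ᵥ c t))
      = (W r ⬝ᵥ V r) - (W 0 ⬝ᵥ V 0) := by
    apply intervalIntegral.integral_eq_sub_of_hasDeriv_right_of_le hr hφC
      (fun x hx => (hφd x hx).hasDerivWithinAt)
    apply ContinuousOn.intervalIntegrable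
    rwa [Set.uIcc_of_le hr]
  have hWr : W r ⬝ᵥ V r = 0 := by
    simp [hW, dotProduct, intervalIntegral.integral_same]
  have hV0 : W 0 ⬝ᵥ V 0 = 0 := by
    simp [hV, dotProduct, intervalIntegral.integral_same]
  have hIntbV : IntervalIntegrable (fun t => b t ⬝ᵥ V t) MeasureTheory.volume 0 r := by
    apply ContinuousOn.intervalIntegrable
    rw [Set.uIcc_of_le hr]
    exact contOn_dot (fun i => (hbC i).mono sub1) hVCi
  have hIntWc : IntervalIntegrable (fun t => W t ⬝ᵥ c t) MeasureTheory.volume 0 r := by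
    apply ContinuousOn.intervalIntegrable
    rw [Set.uIcc_of_le hr]
    exact contOn_dot hWCi (fun i => (hcCi i).mono sub2)
  have hIntnbV : IntervalIntegrable (fun t => -(b t ⬝ᵥ V t)) MeasureTheory.volume 0 r := by
    apply ContinuousOn.intervalIntegrable
    rw [Set.uIcc_of_le hr]
    exact (contOn_dot (fun i => (hbC i).mono sub1) hVCi).neg
  have eq1 : (∫ t in (0:ℝ)..r, b t ⬝ᵥ V t) = ∫ t in (0:ℝ)..r, W t ⬝ᵥ c t := by
    have h2 := key
    rw [hWr, hV0, sub_zero, intervalIntegral.integral_add hIntnbV hIntWc] at h2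
    have h3 : (∫ t in (0:ℝ)..r, -(b t ⬝ᵥ V t)) = -∫ t in (0:ℝ)..r, b t ⬝ᵥ V t := by
      rw [← intervalIntegral.integral_neg]
    rw [h3] at h2
    linarith
  -- Term 1 as ∫ W ⬝ᵥ c
  have hT1 : (∫ y in (0:ℝ)..r,
      (a y ⬝ᵥ ((H y)⁻¹ *ᵥ (fun i => ∫ x in y..r, a x i * f x))) * f y)
      = ∫ t in (0:ℝ)..r, W t ⬝ᵥ c t := by
    apply intervalIntegral.integral_congr
    intro y hy
    simp only
    have hWy : (fun i => ∫ x in y..r, a x i * f x) = W y := by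
      funext i
      simp [hW, hb]
    rw [hWy, dot_mulVec_symm _ (hinvsym y), dot_mulVec_scale, hc]
  -- Term 2 with Ws
  have hT2 : (∫ y in (0:ℝ)..r,
      (a y ⬝ᵥ ((H y)⁻¹ *ᵥ (fun i => ∫ x in y..s, a x i * f x))) * f y)
      = ∫ y in (0:ℝ)..r, (a y ⬝ᵥ ((H y)⁻¹ *ᵥ Ws y)) * f y := by
    apply intervalIntegral.integral_congr
    intro y hy
    simp only
    rfl
  -- the double integral
  have hDBL : (∫ y₁ in (0:ℝ)..r, (∫ y₂ in (0:ℝ)..s,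
      (a y₁ ⬝ᵥ (((H y₁)⁻¹ * H (max y₁ y₂) * (H y₂)⁻¹) *ᵥ a y₂)) * f y₂) * f y₁)
      = ∫ y₁ in (0:ℝ)..r,
        ((a y₁ ⬝ᵥ V y₁) + (a y₁ ⬝ᵥ ((H y₁)⁻¹ *ᵥ Ws y₁))) * f y₁ := by
    apply intervalIntegral.integral_congr
    intro y₁ hy₁
    simp only
    rw [Set.uIcc_of_le hr] at hy₁
    have hy₁s : y₁ ≤ s := le_trans hy₁.2 hrs
    have hy₁1 : y₁ < 1 := lt_of_le_of_lt hy₁.2 hr1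
    have hdet₁ : IsUnit (H y₁).det := hdet y₁ hy₁.1 hy₁1
    congr 1
    have e1 : Set.EqOn
        (fun y₂ => (a y₁ ⬝ᵥ (((H y₁)⁻¹ * H (max y₁ y₂) * (H y₂)⁻¹) *ᵥ a y₂)) * f y₂)
        (fun y₂ => a y₁ ⬝ᵥ c y₂) (Set.Icc 0 y₁) := by
      intro y₂ hy₂
      simp only
      rw [max_eq_left hy₂.2, Matrix.nonsing_inv_mul _ hdet₁, Matrix.one_mul,
        dot_mulVec_scale, hc]
    have e2 : Set.EqOn
        (fun y₂ => (a y₁ ⬝ᵥ (((H y₁)⁻¹ * H (max y₁ y₂) * (H y₂)⁻¹) *ᵥ a y₂)) * f y₂)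
        (fun y₂ => a y₁ ⬝ᵥ ((H y₁)⁻¹ *ᵥ b y₂)) (Set.Icc y₁ s) := by
      intro y₂ hy₂
      simp only
      rw [max_eq_right hy₂.1, Matrix.mul_assoc,
        Matrix.mul_nonsing_inv _ (hdet y₂ (le_trans hy₁.1 hy₂.1) (lt_of_le_of_lt hy₂.2 hs1)),
        Matrix.mul_one, dot_mulVec_scale]
    have hn1C : ContinuousOn (fun y₂ => a y₁ ⬝ᵥ c y₂) (Set.Icc 0 y₁) :=
      contOn_dot (fun i => continuousOn_const)
        (fun i => (hcCi i).mono (Set.Icc_subset_Icc le_rfl hy₁s))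
    have hn2C : ContinuousOn (fun y₂ => a y₁ ⬝ᵥ ((H y₁)⁻¹ *ᵥ b y₂)) (Set.Icc y₁ s) := by
      refine contOn_dot (fun i => continuousOn_const) (fun i => ?_)
      have hfun : (fun y₂ => ((H y₁)⁻¹ *ᵥ b y₂) i) = fun y₂ => ∑ j, (H y₁)⁻¹ i j * b y₂ j := by
        funext y₂
        simp [Matrix.mulVec, dotProduct]
      rw [hfun]
      exact continuousOn_finset_sum _ fun j _ => continuousOn_const.mul
        ((hbC j).mono (Set.Icc_subset_Icc hy₁.1 hs1.le))
    have int1 : IntervalIntegrable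
        (fun y₂ => (a y₁ ⬝ᵥ (((H y₁)⁻¹ * H (max y₁ y₂) * (H y₂)⁻¹) *ᵥ a y₂)) * f y₂)
        MeasureTheory.volume 0 y₁ := by
      apply ContinuousOn.intervalIntegrable
      rw [Set.uIcc_of_le hy₁.1]
      exact hn1C.congr e1
    have int2 : IntervalIntegrable
        (fun y₂ => (a y₁ ⬝ᵥ (((H y₁)⁻¹ * H (max y₁ y₂) * (H y₂)⁻¹) *ᵥ a y₂)) * f y₂)
        MeasureTheory.volume y₁ s := by
      apply ContinuousOn.intervalIntegrable
      rw [Set.uIcc_of_le hy₁s]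
      exact hn2C.congr e2
    rw [← intervalIntegral.integral_add_adjacent_intervals int1 int2]
    have p1 : (∫ y₂ in (0:ℝ)..y₁,
        (a y₁ ⬝ᵥ (((H y₁)⁻¹ * H (max y₁ y₂) * (H y₂)⁻¹) *ᵥ a y₂)) * f y₂)
        = a y₁ ⬝ᵥ V y₁ := by
      have e1' : Set.EqOn
          (fun y₂ => (a y₁ ⬝ᵥ (((H y₁)⁻¹ * H (max y₁ y₂) * (H y₂)⁻¹) *ᵥ a y₂)) * f y₂)
          (fun y₂ => a y₁ ⬝ᵥ c y₂) (Set.uIcc 0 y₁) := by rwa [Set.uIcc_of_le hy₁.1]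
      rw [intervalIntegral.integral_congr e1',
        dot_intervalIntegral (a y₁) c 0 y₁ (fun i => hcInt i 0 y₁ le_rfl hy₁.1 hy₁s)]
    have p2 : (∫ y₂ in y₁..s,
        (a y₁ ⬝ᵥ (((H y₁)⁻¹ * H (max y₁ y₂) * (H y₂)⁻¹) *ᵥ a y₂)) * f y₂)
        = a y₁ ⬝ᵥ ((H y₁)⁻¹ *ᵥ Ws y₁) := by
      have e2' : Set.EqOn
          (fun y₂ => (a y₁ ⬝ᵥ (((H y₁)⁻¹ * H (max y₁ y₂) * (H y₂)⁻¹) *ᵥ a y₂)) * f y₂)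
          (fun y₂ => a y₁ ⬝ᵥ ((H y₁)⁻¹ *ᵥ b y₂)) (Set.uIcc y₁ s) := by
        rwa [Set.uIcc_of_le hy₁s]
      have hkInt : ∀ i, IntervalIntegrable (fun x => ((H y₁)⁻¹ *ᵥ b x) i)
          MeasureTheory.volume y₁ s := by
        intro i
        have hkC : ContinuousOn (fun x => ((H y₁)⁻¹ *ᵥ b x) i) (Set.Icc y₁ s) := by
          have hfun : (fun x => ((H y₁)⁻¹ *ᵥ b x) i)
              = fun x => ∑ j, (H y₁)⁻¹ i j * b x j := by
            funext x
            simp [Matrix.mulVec, dotProduct]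
          rw [hfun]
          exact continuousOn_finset_sum _ fun j _ => continuousOn_const.mul
            ((hbC j).mono (Set.Icc_subset_Icc hy₁.1 hs1.le))
        apply ContinuousOn.intervalIntegrable
        rwa [Set.uIcc_of_le hy₁s]
      rw [intervalIntegral.integral_congr e2',
        dot_intervalIntegral (a y₁) (fun y₂ => (H y₁)⁻¹ *ᵥ b y₂) y₁ s hkInt,
        mulVec_intervalIntegral _ b y₁ s (fun i => hbInt i y₁ s hy₁.1 hy₁s hs1.le)]
    rw [p1, p2]
  -- split the rewritten double integral
  have hIntaV : IntervalIntegrable (fun y => (a y ⬝ᵥ V y) * f y) MeasureTheory.volume 0 r := by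
    apply ContinuousOn.intervalIntegrable
    rw [Set.uIcc_of_le hr]
    exact (contOn_dot (fun i => (haC i).mono sub1) hVCi).mul (hf.mono sub1)
  have hIntWs : IntervalIntegrable (fun y => (a y ⬝ᵥ ((H y)⁻¹ *ᵥ Ws y)) * f y)
      MeasureTheory.volume 0 r := by
    apply ContinuousOn.intervalIntegrable
    rw [Set.uIcc_of_le hr]
    refine ContinuousOn.mul ?_ (hf.mono sub1)
    refine contOn_dot (fun i => (haC i).mono sub1) (fun i => ?_)
    have hfun : (fun y => ((H y)⁻¹ *ᵥ Ws y) i) = fun y => ∑ j, (H y)⁻¹ i j * Ws y j := by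
      funext y
      simp [Matrix.mulVec, dotProduct]
    rw [hfun]
    exact continuousOn_finset_sum _ fun j _ => ((hinvCij i j).mono sub2).mul (hWsCi j)
  have hsplit : (∫ y₁ in (0:ℝ)..r,
      ((a y₁ ⬝ᵥ V y₁) + (a y₁ ⬝ᵥ ((H y₁)⁻¹ *ᵥ Ws y₁))) * f y₁)
      = (∫ y in (0:ℝ)..r, (a y ⬝ᵥ V y) * f y)
        + ∫ y in (0:ℝ)..r, (a y ⬝ᵥ ((H y)⁻¹ *ᵥ Ws y)) * f y := by
    rw [← intervalIntegral.integral_add hIntaV hIntWs]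
    apply intervalIntegral.integral_congr
    intro y hy
    simp only
    ring
  -- ∫ (a ⬝ᵥ V) f = ∫ b ⬝ᵥ V
  have haVbV : (∫ y in (0:ℝ)..r, (a y ⬝ᵥ V y) * f y) = ∫ t in (0:ℝ)..r, b t ⬝ᵥ V t := by
    apply intervalIntegral.integral_congr
    intro y hy
    simp only [hb, dotProduct, Finset.sum_mul]
    exact Finset.sum_congr rfl fun i _ => by ring
  -- conclude
  rw [hT1, hT2, hDBL, hsplit, haVbV, eq1]
  ring
end
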